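/- Let V be a finite set of n nodes and let Att1, Att2 be two periodic attractors (finite sequences of binary vectors indexed by V, of periods p1 and p2). For a subset Ŵ ⊆ V, define Dist(Att1, Att2, Ŵ) = min over shifts t ∈ {0,...,lcm(p1,p2)−1} of the number of nodes v ∈ Ŵ such that the infinite periodic sequence of values of v in Att1 (starting at time 0) differs from that in Att2 starting at time t. For a subset V̂ ⊆ V and the graph G on vertex set V̂ with edges {v,w} whenever Dist(Att1, Att2, {v,w}) = 0: if G has at least one edge, then Dist(Att1, Att2, V̂) = |V̂| − γ, where γ is the size of a maximum clique of G. -/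

import Mathlib

private lemma per_mul {f : ℕ → Bool} {p : ℕ} (hf : ∀ k, f (k + p) = f k) :
    ∀ n k, f (k + p * n) = f k := by
  intro n
  induction n with
  | zero => simp
  | succ n ih =>
    intro k
    have e : k + p * (n + 1) = (k + p * n) + p := by ring
    rw [e, hf, ih]

private lemma per_modeq {f : ℕ → Bool} {p : ℕ} (hp : 0 < p) (hf : ∀ k, f (k + p) = f k)
    {m n : ℕ} (h : m ≡ n [MOD p]) : f m = f n := by
  have key : ∀ m, f m = f (m % p) := by
    intro m
    conv_lhs => rw [← Nat.mod_add_div m p]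
    exact per_mul hf _ _
  rw [key m, key n]
  exact congrArg f h

private lemma per_gcd {f : ℕ → Bool} {p q : ℕ} (hp : 0 < p) (hq : 0 < q)
    (hfp : ∀ k, f (k + p) = f k) (hfq : ∀ k, f (k + q) = f k) :
    ∀ k, f (k + Nat.gcd p q) = f k := by
  intro k
  obtain ⟨a, b, hab⟩ : ∃ a b : ℕ, p * a = Nat.gcd p q + q * b := by
    set A := Nat.gcdA p q with hA
    set B := Nat.gcdB p q with hBB
    set N : ℕ := A.natAbs + B.natAbs
    have hbez : (Nat.gcd p q : ℤ) = p * A + q * B := Nat.gcd_eq_gcd_ab p q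
    have hq1 : (1 : ℤ) ≤ q := by exact_mod_cast hq
    have hp1' : (1 : ℤ) ≤ p := by exact_mod_cast hp
    have hNA : (A.natAbs : ℤ) ≤ (N : ℤ) := by simp [N]
    have hNB : (B.natAbs : ℤ) ≤ (N : ℤ) := by simp [N]
    have hN0 : (0 : ℤ) ≤ (N : ℤ) := Int.natCast_nonneg N
    have ha0 : (0 : ℤ) ≤ A + N * q := by
      have h2 : (N : ℤ) ≤ N * q := le_mul_of_one_le_right hN0 hq1
      have h3 : -A ≤ (A.natAbs : ℤ) := by omega
      linarith
    have hb0 : (0 : ℤ) ≤ N * p - B := by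
      have h2 : (N : ℤ) ≤ N * p := le_mul_of_one_le_right hN0 hp1'
      have h3 : B ≤ (B.natAbs : ℤ) := by omega
      linarith
    refine ⟨(A + N * q).toNat, (N * p - B).toNat, ?_⟩
    have : (p : ℤ) * (A + N * q) = Nat.gcd p q + q * (N * p - B) := by
      rw [hbez]; ring
    have h2 : (p : ℤ) * ((A + N * q).toNat : ℤ) = (Nat.gcd p q : ℤ) + q * ((N * p - B).toNat : ℤ) := by
      rw [Int.toNat_of_nonneg ha0, Int.toNat_of_nonneg hb0]; exact this
    exact_mod_cast h2
  calc f (k + Nat.gcd p q) = f (k + Nat.gcd p q + q * b) := (per_mul hfq b _).symm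
    _ = f (k + p * a) := by rw [Nat.add_assoc, ← hab]
    _ = f k := per_mul hfp a k

private lemma gcd_lcm_dvd (a b c : ℕ) :
    Nat.gcd a (Nat.lcm b c) ∣ Nat.lcm (Nat.gcd a b) (Nat.gcd a c) := by
  rcases eq_or_ne a 0 with rfl | ha
  · simp
  rcases eq_or_ne b 0 with rfl | hb
  · simpa using Nat.dvd_lcm_left _ _
  rcases eq_or_ne c 0 with rfl | hc
  · simpa using Nat.dvd_lcm_right _ _
  have hlcm : Nat.lcm b c ≠ 0 := Nat.lcm_ne_zero hb hc
  have hab : Nat.gcd a b ≠ 0 := fun h => ha (Nat.eq_zero_of_gcd_eq_zero_left h)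
  have hac : Nat.gcd a c ≠ 0 := fun h => ha (Nat.eq_zero_of_gcd_eq_zero_left h)
  have h1 : Nat.gcd a (Nat.lcm b c) ≠ 0 := fun h => ha (Nat.eq_zero_of_gcd_eq_zero_left h)
  have h2 : Nat.lcm (Nat.gcd a b) (Nat.gcd a c) ≠ 0 := Nat.lcm_ne_zero hab hac
  rw [← Nat.factorization_le_iff_dvd h1 h2, Nat.factorization_gcd ha hlcm,
    Nat.factorization_lcm hb hc, Nat.factorization_lcm hab hac,
    Nat.factorization_gcd ha hb, Nat.factorization_gcd ha hc, Finsupp.le_def]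
  intro p
  simp only [Finsupp.inf_apply, Finsupp.sup_apply]
  omega


attribute [local instance] Classical.propDecidable

/-- The distance between two periodic attractors `A` (period `p1`) and `B` (period `p2`)
observed on the node set `W`: the minimum over time shifts `t ∈ {0, …, lcm(p1,p2)−1}`
of the number of nodes `v ∈ W` whose infinite sequence of values in `A` (from time 0)
differs from that in `B` (from time `t`). -/
noncomputable def AttDist {V : Type*} (A B : ℕ → V → Bool) (p1 p2 : ℕ) (W : Finset V) : ℕ :=
  sInf {c : ℕ | ∃ t < Nat.lcm p1 p2, c = (W.filter (fun v => ∃ k, A k v ≠ B (t + k) v)).card}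

theorem stmt0 {V : Type*} [Fintype V] [DecidableEq V]
    (A B : ℕ → V → Bool) (p1 p2 : ℕ) (hp1 : 0 < p1) (hp2 : 0 < p2)
    (hA : ∀ t v, A (t + p1) v = A t v) (hB : ∀ t v, B (t + p2) v = B t v)
    (Vhat : Finset V)
    (G : SimpleGraph V)
    (hG : ∀ v w : V, G.Adj v w ↔ (v ≠ w ∧ v ∈ Vhat ∧ w ∈ Vhat ∧ AttDist A B p1 p2 {v, w} = 0))
    (γ : ℕ)
    (hclique : ∃ s : Finset V, ↑s ⊆ (Vhat : Set V) ∧ G.IsNClique γ s)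
    (hmax : ∀ (n : ℕ) (s : Finset V), ↑s ⊆ (Vhat : Set V) → G.IsNClique n s → n ≤ γ)
    (hedge : ∃ v w : V, G.Adj v w) :
    AttDist A B p1 p2 Vhat = Vhat.card - γ := by
  classical
  set L := Nat.lcm p1 p2 with hLdef
  have hL : 0 < L := Nat.lcm_pos hp1 hp2
  set Match : ℕ → V → Prop := fun t v => ∀ k, A k v = B (t + k) v with hMatch
  -- basic facts about the distance set
  have hAtt : ∀ W : Finset V, AttDist A B p1 p2 W =
      sInf {c : ℕ | ∃ t < L, c = (W.filter (fun v => ∃ k, A k v ≠ B (t + k) v)).card} :=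
    fun W => rfl
  have hne : ∀ W : Finset V,
      {c : ℕ | ∃ t < L, c = (W.filter (fun v => ∃ k, A k v ≠ B (t + k) v)).card}.Nonempty :=
    fun W => ⟨_, 0, hL, rfl⟩
  -- filter card in terms of Match
  have hfilter : ∀ (W : Finset V) (t : ℕ),
      (W.filter (fun v => ∃ k, A k v ≠ B (t + k) v)).card
        = W.card - (W.filter (fun v => Match t v)).card := by
    intro W t
    have hcongr : W.filter (fun v => ∃ k, A k v ≠ B (t + k) v)
        = W.filter (fun v => ¬ Match t v) := by
      apply Finset.filter_congr
      intro v _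
      simp only [hMatch]
      push_neg
      rfl
    rw [hcongr]
    have := Finset.card_filter_add_card_filter_not (s := W) (p := fun v => Match t v)
    omega
  -- characterization of zero distance on pairs
  have dist_zero : ∀ v w : V, AttDist A B p1 p2 {v, w} = 0 ↔
      ∃ t < L, Match t v ∧ Match t w := by
    intro v w
    rw [hAtt, Nat.sInf_eq_zero]
    constructor
    · rintro (h0 | hemp)
      · obtain ⟨t, htL, ht⟩ := h0
        have hall : ∀ u ∈ ({v, w} : Finset V), Match t u := by
          intro u hu k
          by_contra hk
          have hmem : u ∈ Finset.filter (fun x => ∃ k, A k x ≠ B (t + k) x) {v, w} :=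
            Finset.mem_filter.2 ⟨hu, ⟨k, hk⟩⟩
          rw [Finset.card_eq_zero.mp ht.symm] at hmem
          simp at hmem
        exact ⟨t, htL, hall v (by simp), hall w (by simp)⟩
      · exact absurd hemp (Set.nonempty_iff_ne_empty.mp (hne _))
    · rintro ⟨t, htL, hv, hw⟩
      left
      refine ⟨t, htL, ?_⟩
      symm
      rw [Finset.card_eq_zero, Finset.filter_eq_empty_iff]
      intro u hu
      rcases Finset.mem_insert.mp hu with rfl | hu
      · push_neg; exact hv
      · rw [Finset.mem_singleton] at hu; subst hu; push_neg; exact hw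
  -- reduce a matching shift mod L
  have match_mod : ∀ v t, Match t v → Match (t % L) v := by
    intro v t h k
    rw [h k]
    have hme : t % L + k ≡ t + k [MOD p2] :=
      ((Nat.mod_modEq t L).of_dvd (Nat.dvd_lcm_right p1 p2)).add_right k
    exact (per_modeq (f := fun m => B m v) hp2 (fun m => hB m v) hme).symm
  -- minimal periods
  set Per : V → ℕ → Prop := fun v d => 0 < d ∧ ∀ k, B (k + d) v = B k v with hPerdef
  set dm : V → ℕ := fun v => sInf {d | Per v d} with hdmdef
  have hPer_ne : ∀ v, {d | Per v d}.Nonempty := fun v => ⟨p2, hp2, fun k => hB k v⟩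
  have hdm : ∀ v, Per v (dm v) := fun v => Nat.sInf_mem (hPer_ne v)
  have hdm_dvd : ∀ v d, Per v d → dm v ∣ d := by
    intro v d hd
    have hgcd : Per v (Nat.gcd (dm v) d) :=
      ⟨Nat.gcd_pos_of_pos_left _ (hdm v).1, per_gcd (f := fun m => B m v) (hdm v).1 hd.1 (hdm v).2 hd.2⟩
    have h1 : dm v ≤ Nat.gcd (dm v) d := Nat.sInf_le hgcd
    have h2 : Nat.gcd (dm v) d ≤ dm v := Nat.le_of_dvd (hdm v).1 (Nat.gcd_dvd_left _ _)
    have h3 : Nat.gcd (dm v) d = dm v := le_antisymm h2 h1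
    rw [← h3]; exact Nat.gcd_dvd_right _ _
  have match_congr : ∀ v s t, Match s v → s ≡ t [MOD dm v] → Match t v := by
    intro v s t hs hst k
    rw [hs k]
    exact per_modeq (f := fun m => B m v) (hdm v).1 (fun m => (hdm v).2 m) (hst.add_right k)
  have match_diff : ∀ v s t, Match s v → Match t v → s ≡ t [MOD dm v] := by
    suffices H : ∀ v s t, s ≤ t → Match s v → Match t v → s ≡ t [MOD dm v] by
      intro v s t hs ht
      rcases le_total s t with h | h
      exacts [H v s t h hs ht, (H v t s h ht hs).symm]
    intro v s t hle hs ht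
    rcases Nat.eq_or_lt_of_le hle with rfl | hlt
    · rfl
    have hsp : s ≤ s * p2 := Nat.le_mul_of_pos_right s hp2
    have hper : Per v (t - s) := by
      refine ⟨by omega, fun m => ?_⟩
      have h1 : B (m + s * p2 + (t - s)) v = B (m + s * p2) v := by
        have e1 : m + s * p2 + (t - s) = t + (m + s * p2 - s) := by omega
        have e2 : s + (m + s * p2 - s) = m + s * p2 := by omega
        rw [e1, ← ht (m + s * p2 - s), hs (m + s * p2 - s), e2]
      have e3 : m + (t - s) + p2 * s = m + s * p2 + (t - s) := by
        rw [Nat.mul_comm p2 s]; set c := s * p2; omega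
      have e4 : m + p2 * s = m + s * p2 := by rw [Nat.mul_comm]
      calc B (m + (t - s)) v = B (m + (t - s) + p2 * s) v := (per_mul (f := fun m => B m v) (fun k => hB k v) s _).symm
        _ = B (m + s * p2 + (t - s)) v := by rw [e3]
        _ = B (m + s * p2) v := h1
        _ = B (m + p2 * s) v := by rw [e4]
        _ = B m v := per_mul (f := fun m => B m v) (fun k => hB k v) s m
    exact (Nat.modEq_iff_dvd' hle).mpr (hdm_dvd v _ hper)
  -- common shift for cliques
  have common : ∀ s : Finset V,
      (∀ v ∈ s, ∀ w ∈ s, v ≠ w → ∃ u, Match u v ∧ Match u w) →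
      (∀ v ∈ s, ∃ u, Match u v) →
      ∃ t, ∀ v ∈ s, Match t v := by
    intro s
    induction s using Finset.induction_on with
    | empty => exact fun _ _ => ⟨0, by simp⟩
    | @insert a s ha ih =>
      intro hpair hmatch
      obtain ⟨t', ht'⟩ := ih
        (fun v hv w hw => hpair v (Finset.mem_insert_of_mem hv) w (Finset.mem_insert_of_mem hw))
        (fun v hv => hmatch v (Finset.mem_insert_of_mem hv))
      obtain ⟨ta, hta⟩ := hmatch a (Finset.mem_insert_self a s)
      set M := s.lcm dm with hM
      have hdvdM : ∀ v ∈ s, dm v ∣ M := fun v hv => Finset.dvd_lcm hv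
      have key : ∀ v ∈ s, ta ≡ t' [MOD Nat.gcd (dm a) (dm v)] := by
        intro v hv
        rcases eq_or_ne a v with rfl | hav
        · exact absurd hv ha
        obtain ⟨u, hua, huv⟩ := hpair a (Finset.mem_insert_self a s) v
          (Finset.mem_insert_of_mem hv) hav
        have h1 : ta ≡ u [MOD Nat.gcd (dm a) (dm v)] :=
          (match_diff a ta u hta hua).of_dvd (Nat.gcd_dvd_left _ _)
        have h2 : u ≡ t' [MOD Nat.gcd (dm a) (dm v)] :=
          (match_diff v u t' huv (ht' v hv)).of_dvd (Nat.gcd_dvd_right _ _)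
        exact h1.trans h2
      have hdistr : ∀ u : Finset V, Nat.gcd (dm a) (u.lcm dm)
          ∣ u.lcm (fun v => Nat.gcd (dm a) (dm v)) := by
        intro u
        induction u using Finset.induction_on with
        | empty => simp
        | @insert b u hb ih2 =>
          rw [Finset.lcm_insert, Finset.lcm_insert, lcm_eq_nat_lcm, lcm_eq_nat_lcm]
          refine dvd_trans (gcd_lcm_dvd (dm a) (dm b) (u.lcm dm)) (Nat.lcm_dvd ?_ ?_)
          · exact Nat.dvd_lcm_left _ _
          · exact dvd_trans ih2 (Nat.dvd_lcm_right _ _)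
      have compat : ta ≡ t' [MOD Nat.gcd (dm a) M] := by
        have hdvd2 : ∀ v ∈ s, Nat.gcd (dm a) (dm v) ∣ ((t' : ℤ) - ta).natAbs := by
          intro v hv
          have h := (Nat.modEq_iff_dvd).mp (key v hv)
          exact Int.natCast_dvd_natCast.mp (Int.dvd_natAbs.mpr h)
        have hl : s.lcm (fun v => Nat.gcd (dm a) (dm v)) ∣ ((t' : ℤ) - ta).natAbs :=
          Finset.lcm_dvd hdvd2
        have hfin : Nat.gcd (dm a) M ∣ ((t' : ℤ) - ta).natAbs :=
          dvd_trans (hdistr s) hl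
        rw [Nat.modEq_iff_dvd]
        exact dvd_trans (Int.natCast_dvd_natCast.mpr hfin) (Int.natAbs_dvd.mpr dvd_rfl)
      obtain ⟨k, hk1, hk2⟩ := Nat.chineseRemainder' compat
      refine ⟨k, ?_⟩
      intro v hv
      rcases Finset.mem_insert.mp hv with rfl | hv
      · exact match_congr v ta k hta hk1.symm
      · exact match_congr v t' k (ht' v hv) ((hk2.of_dvd (hdvdM v hv)).symm)
  -- clique bound: for t < L, the set of matching nodes has card ≤ γ
  have bound : ∀ t < L, (Vhat.filter (fun v => Match t v)).card ≤ γ := by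
    intro t htL
    set S := Vhat.filter (fun v => Match t v) with hS
    have hsub : ↑S ⊆ (Vhat : Set V) := by
      intro x hx
      rw [Finset.mem_coe, hS, Finset.mem_filter] at hx
      exact hx.1
    refine hmax S.card S hsub ⟨?_, rfl⟩
    intro x hx y hy hxy
    rw [Finset.mem_coe, hS, Finset.mem_filter] at hx hy
    exact (hG x y).mpr ⟨hxy, hx.1, hy.1, (dist_zero x y).mpr ⟨t, htL, hx.2, hy.2⟩⟩
  -- γ ≥ 2
  have hγ2 : 2 ≤ γ := by
    obtain ⟨v, w, hadj⟩ := hedge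
    obtain ⟨hvw, hv, hw, hd⟩ := (hG v w).mp hadj
    refine hmax 2 {v, w} ?_ ⟨?_, Finset.card_pair hvw⟩
    · intro x hx
      simp only [Finset.coe_insert, Finset.coe_singleton, Set.mem_insert_iff,
        Set.mem_singleton_iff] at hx
      rcases hx with rfl | rfl <;> simpa
    · intro x hx y hy hxy
      simp only [Finset.coe_insert, Finset.coe_singleton, Set.mem_insert_iff,
        Set.mem_singleton_iff] at hx hy
      rcases hx with rfl | rfl <;> rcases hy with rfl | rfl
      · exact absurd rfl hxy
      · exact hadj
      · exact hadj.symm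
      · exact absurd rfl hxy
  -- a good shift realizing the maximum clique
  have hgood : ∃ t < L, γ ≤ (Vhat.filter (fun v => Match t v)).card := by
    obtain ⟨s, hsub, hcl⟩ := hclique
    have hcard : s.card = γ := hcl.2
    have hpair : ∀ v ∈ s, ∀ w ∈ s, v ≠ w → ∃ u, Match u v ∧ Match u w := by
      intro v hv w hw hvw
      have hadj : G.Adj v w := hcl.1 (Finset.mem_coe.mpr hv) (Finset.mem_coe.mpr hw) hvw
      obtain ⟨-, -, -, hd⟩ := (hG v w).mp hadj
      obtain ⟨u, _, h1, h2⟩ := (dist_zero v w).mp hd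
      exact ⟨u, h1, h2⟩
    have hmatchable : ∀ v ∈ s, ∃ u, Match u v := by
      intro v hv
      have hlt : 1 < s.card := by omega
      obtain ⟨w, hw, hwv⟩ := Finset.exists_mem_ne hlt v
      obtain ⟨u, h1, h2⟩ := hpair w hw v hv hwv
      exact ⟨u, h2⟩
    obtain ⟨t, ht⟩ := common s hpair hmatchable
    refine ⟨t % L, Nat.mod_lt _ hL, ?_⟩
    rw [← hcard]
    apply Finset.card_le_card
    intro v hv
    refine Finset.mem_filter.2 ⟨?_, match_mod v t (ht v hv)⟩
    exact Finset.mem_coe.mp (hsub (Finset.mem_coe.mpr hv))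
  have hγcard : γ ≤ Vhat.card := by
    obtain ⟨s, hsub, hcl⟩ := hclique
    rw [← hcl.2]
    exact Finset.card_le_card (fun x hx => Finset.mem_coe.mp (hsub (Finset.mem_coe.mpr hx)))
  rw [hAtt]
  obtain ⟨t0, ht0L, ht0⟩ := Nat.sInf_mem (hne Vhat)
  obtain ⟨t1, ht1L, ht1⟩ := hgood
  apply le_antisymm
  · have hmem : (Vhat.filter (fun v => ∃ k, A k v ≠ B (t1 + k) v)).card ∈
        {c : ℕ | ∃ t < L, c = (Vhat.filter (fun v => ∃ k, A k v ≠ B (t + k) v)).card} :=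
      ⟨t1, ht1L, rfl⟩
    refine le_trans (Nat.sInf_le hmem) ?_
    rw [hfilter]
    omega
  · rw [ht0, hfilter]
    have := bound t0 ht0L
    omega
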